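/- Let A be a real symmetric d×d matrix, c ∈ ℝ^d, γ ∈ ℝ, and K ≥ 1 an integer. Define the gradient-descent step map F : ℝ^d → ℝ^d by F(x) = x − γ A(x − c), let F^{[K]} denote its K-fold composition, and define m : ℝ^d → ℝ by m(x) = (1/2)⟨F^{[K]}(x) − c, A(F^{[K]}(x) − c)⟩. Then m is differentiable and its gradient satisfies ∇m(x) = (I − γA)^{2K} A (x − c) for every x ∈ ℝ^d. (Thus the MAML meta-gradient with K exact gradient-descent inner steps on a quadratic loss equals the gradient of the surrogate loss corresponding to the weights Θ_{2K+1}, i.e., θ_{2K+1} = 1 and all other θ_k = 0.) -/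

import Mathlib

open Matrix
open scoped RealInnerProductSpace


lemma quad_hasGradientAt {d : ℕ} (M : EuclideanSpace ℝ (Fin d) →L[ℝ] EuclideanSpace ℝ (Fin d))
    (hM : IsSelfAdjoint M) (c x : EuclideanSpace ℝ (Fin d)) :
    HasGradientAt (fun y => (1 / 2 : ℝ) * ⟪y - c, M (y - c)⟫) (M (x - c)) x := by
  rw [hasGradientAt_iff_hasFDerivAt]
  have h1 : HasFDerivAt (fun y : EuclideanSpace ℝ (Fin d) => y - c)
      (ContinuousLinearMap.id ℝ _) x := (hasFDerivAt_id x).sub_const c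
  have h2 : HasFDerivAt (fun y : EuclideanSpace ℝ (Fin d) => M (y - c))
      (M.comp (ContinuousLinearMap.id ℝ _)) x := M.hasFDerivAt.comp x h1
  have h4 := (h1.inner ℝ h2).const_mul (1 / 2 : ℝ)
  convert h4 using 1
  show (_ : EuclideanSpace ℝ (Fin d) →L[ℝ] ℝ) = _
  refine ContinuousLinearMap.ext fun z => ?_
  have hadj : ⟪x - c, M z⟫ = ⟪M (x - c), z⟫ := by
    nth_rewrite 2 [← hM.adjoint_eq]
    exact (ContinuousLinearMap.adjoint_inner_left M z (x - c)).symm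
  simp only [ContinuousLinearMap.smul_apply, ContinuousLinearMap.comp_apply,
    ContinuousLinearMap.prod_apply, ContinuousLinearMap.id_apply, fderivInnerCLM_apply,
    InnerProductSpace.toDual_apply_apply, smul_eq_mul]
  rw [hadj, real_inner_comm z (M (x - c))]
  ring
  rfl


/-- The MAML meta-gradient with `K` exact gradient-descent inner steps on a
quadratic loss: with `F x = x - γ A (x - c)` and
`m x = (1/2) ⟪F^[K] x - c, A (F^[K] x - c)⟫`, the function `m` is differentiable and
`∇ m x = (I - γA)^(2K) A (x - c)`. -/
theorem stmt_2 (d : ℕ) (A : Matrix (Fin d) (Fin d) ℝ) (hA : A.IsSymm)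
    (c : EuclideanSpace ℝ (Fin d)) (γ : ℝ) (K : ℕ) (hK : 1 ≤ K)
    (F : EuclideanSpace ℝ (Fin d) → EuclideanSpace ℝ (Fin d))
    (hF : ∀ x, F x = x - γ • Matrix.toEuclideanLin A (x - c))
    (m : EuclideanSpace ℝ (Fin d) → ℝ)
    (hm : ∀ x, m x = (1 / 2) * ⟪F^[K] x - c, Matrix.toEuclideanLin A (F^[K] x - c)⟫) :
    Differentiable ℝ m ∧
      ∀ x, gradient m x =
        Matrix.toEuclideanLin
          (((1 : Matrix (Fin d) (Fin d) ℝ) - γ • A) ^ (2 * K) * A) (x - c) := by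
  classical
  set B : Matrix (Fin d) (Fin d) ℝ := (1 : Matrix (Fin d) (Fin d) ℝ) - γ • A with hB
  have hAsa : _root_.IsSelfAdjoint A := by
    rw [isSelfAdjoint_iff]
    ext i j
    simp [Matrix.conjTranspose_apply]
    exact congrFun (congrFun hA i) j
  have hBsa : _root_.IsSelfAdjoint B := by
    rw [isSelfAdjoint_iff, hB, star_sub, star_one, star_smul, hAsa.star_eq]
    norm_num
  have hcomm : Commute A B := (Commute.one_right A).sub_right ((Commute.refl A).smul_right γ)
  have hcoe : ∀ (P : Matrix (Fin d) (Fin d) ℝ) (v : EuclideanSpace ℝ (Fin d)),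
      Matrix.toEuclideanLin P v = Matrix.toEuclideanCLM (𝕜 := ℝ) P v := fun _ _ => rfl
  have hclm_sa : ∀ (P : Matrix (Fin d) (Fin d) ℝ), _root_.IsSelfAdjoint P →
      _root_.IsSelfAdjoint (Matrix.toEuclideanCLM (𝕜 := ℝ) P) := by
    intro P hP
    rw [isSelfAdjoint_iff, ← map_star, hP.star_eq]
  -- iterate formula
  have hiter : ∀ n x, F^[n] x - c = Matrix.toEuclideanCLM (𝕜 := ℝ) (B ^ n) (x - c) := by
    intro n
    induction n with
    | zero => intro x; simp
    | succ n ih =>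
      intro x
      rw [Function.iterate_succ_apply', hF, hcoe]
      have h1 : F^[n] x - γ • (Matrix.toEuclideanCLM (𝕜 := ℝ) A) (F^[n] x - c) - c
          = Matrix.toEuclideanCLM (𝕜 := ℝ) B (F^[n] x - c) := by
        rw [hB]
        simp only [map_sub, _root_.map_one, _root_.map_smul, smul_sub,
          ContinuousLinearMap.sub_apply, ContinuousLinearMap.smul_apply,
          ContinuousLinearMap.one_apply]
        abel
      rw [h1, ih, pow_succ', _root_.map_mul]
      rfl
  -- the self-adjoint operator M
  set Mmat : Matrix (Fin d) (Fin d) ℝ := B ^ (2 * K) * A with hMmat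
  have hMsa : _root_.IsSelfAdjoint Mmat := by
    rw [hMmat, ← ((hBsa.pow (2 * K)).commute_iff hAsa)]
    exact (hcomm.pow_right (2 * K)).symm
  set M : EuclideanSpace ℝ (Fin d) →L[ℝ] EuclideanSpace ℝ (Fin d) :=
    Matrix.toEuclideanCLM (𝕜 := ℝ) Mmat with hM
  have hMsa' : _root_.IsSelfAdjoint M := hclm_sa _ hMsa
  -- rewrite m as a quadratic form
  have hmq : m = fun x => (1 / 2 : ℝ) * ⟪x - c, M (x - c)⟫ := by
    funext x
    rw [hm, hiter K x, hcoe]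
    congr 1
    set v := x - c
    have hadj : ∀ (P : Matrix (Fin d) (Fin d) ℝ), _root_.IsSelfAdjoint P →
        ∀ (u w : EuclideanSpace ℝ (Fin d)),
        ⟪Matrix.toEuclideanCLM (𝕜 := ℝ) P u, w⟫ = ⟪u, Matrix.toEuclideanCLM (𝕜 := ℝ) P w⟫ := by
      intro P hP u w
      conv_lhs => rw [← (hclm_sa P hP : ContinuousLinearMap.adjoint _ = _)]
      exact ContinuousLinearMap.adjoint_inner_left _ w u
    have hBKsa : _root_.IsSelfAdjoint (B ^ K) := hBsa.pow _
    rw [hadj _ hBKsa]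
    have hmat : B ^ K * (A * B ^ K) = Mmat := by
      rw [(hcomm.pow_right K).eq, ← mul_assoc, ← pow_add, hMmat, two_mul]
    have : Matrix.toEuclideanCLM (𝕜 := ℝ) (B ^ K)
        (Matrix.toEuclideanCLM (𝕜 := ℝ) A (Matrix.toEuclideanCLM (𝕜 := ℝ) (B ^ K) v))
        = M v := by
      rw [hM, ← hmat, _root_.map_mul, _root_.map_mul]
      rfl
    rw [this]
  have hgrad : ∀ x, HasGradientAt m (M (x - c)) x := by
    rw [hmq]; intro x; exact quad_hasGradientAt M hMsa' c x
  constructor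
  · intro x
    exact ((hgrad x).hasFDerivAt).differentiableAt
  · intro x
    rw [(hgrad x).gradient, hcoe]
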